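/- Monotone dependence of equilibrium-type solutions on the last coordinate: let p, q ∈ (0,1)^n satisfy the equal-flow conditions λ_i p_i (1 − p_{i+1}) = λ_n p_n for all i = 1, …, n−1, and λ_i q_i (1 − q_{i+1}) = λ_n q_n for all i = 1, …, n−1 (where p_{n+1}, q_{n+1} are not needed since the last condition reads λ_{n−1} p_{n−1}(1 − p_n) = λ_n p_n). If p_n > q_n, then p_i > q_i for every i = 1, …, n. -/
import Mathlib


open scoped BigOperators

/-- Extend a vector `x : Fin n → ℝ` to a function on `ℕ` (zero outside the range). -/
noncomputable def extVec {n : ℕ} (x : Fin n → ℝ) (j : ℕ) : ℝ :=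
  if h : j < n then x ⟨j, h⟩ else 0

/-- The flow from site `j` to site `j+1` (1-based paper indexing of the rates;
`j = 0` is the initiation flow, `j = n` is the exit flow) in the closed-loop
ribosome flow model with negative feedback `u = k g(y)`. Densities are stored
0-based: Lean index `i` corresponds to the paper's site `i+1`. -/
noncomputable def rfmFlow (n : ℕ) (lam : ℕ → ℝ) (k : ℝ) (g : ℝ → ℝ)
    (x : Fin n → ℝ) (j : ℕ) : ℝ :=
  if j = 0 then lam 0 * k * g (lam n * extVec x (n - 1)) * (1 - extVec x 0)
  else if j = n then lam n * extVec x (n - 1)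
  else lam j * extVec x (j - 1) * (1 - extVec x j)

/-- The vector field of the closed-loop RFM with negative feedback. -/
noncomputable def rfmField (n : ℕ) (lam : ℕ → ℝ) (k : ℝ) (g : ℝ → ℝ)
    (x : Fin n → ℝ) : Fin n → ℝ :=
  fun i => rfmFlow n lam k g x i.val - rfmFlow n lam k g x (i.val + 1)

/-- Monotone dependence of equal-flow solutions on the last
coordinate: if `p, q ∈ (0,1)^n` satisfy the equal-flow conditions
`λ_i p_i (1 - p_{i+1}) = λ_n p_n` for `i = 1, …, n-1` (1-based; in Lean's
0-based indexing: `lam (j+1) * p j * (1 - p (j+1)) = lam n * p (n-1)` for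
`j = 0, …, n-2`) and likewise for `q`, and `p_n > q_n`, then `p_i > q_i`
for every `i`. -/
theorem rfm_equal_flow_monotone_in_last
    (n : ℕ) (hn : 2 ≤ n) (lam : ℕ → ℝ) (hlam : ∀ i, 1 ≤ i → i ≤ n → 0 < lam i)
    (p q : Fin n → ℝ)
    (hp : ∀ i, p i ∈ Set.Ioo (0:ℝ) 1) (hq : ∀ i, q i ∈ Set.Ioo (0:ℝ) 1)
    (hpflow : ∀ j : ℕ, j < n - 1 →
      lam (j + 1) * extVec p j * (1 - extVec p (j + 1)) = lam n * extVec p (n - 1))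
    (hqflow : ∀ j : ℕ, j < n - 1 →
      lam (j + 1) * extVec q j * (1 - extVec q (j + 1)) = lam n * extVec q (n - 1))
    (hlast : extVec q (n - 1) < extVec p (n - 1)) :
    ∀ i : Fin n, q i < p i := by
  have hn1 : n - 1 < n := by omega
  have hE : ∀ (x : Fin n → ℝ) (j : ℕ) (h : j < n), extVec x j = x ⟨j, h⟩ := by
    intro x j h; simp [extVec, h]
  rw [hE p (n-1) hn1, hE q (n-1) hn1] at hlast
  have key : ∀ m, m < n → q ⟨n-1-m, by omega⟩ < p ⟨n-1-m, by omega⟩ := by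
    intro m
    induction m with
    | zero =>
      intro _
      simpa using hlast
    | succ m ih =>
      intro hm
      have ihm := ih (by omega)
      set j := n - 1 - (m+1) with hj
      have hjlt : j < n - 1 := by omega
      have hj1 : j + 1 = n - 1 - m := by omega
      have hj1n : j + 1 < n := by omega
      have hjn : j < n := by omega
      have hp' := hpflow j hjlt
      have hq' := hqflow j hjlt
      rw [hE p j hjn, hE p (j+1) hj1n, hE p (n-1) hn1] at hp'
      rw [hE q j hjn, hE q (j+1) hj1n, hE q (n-1) hn1] at hq'
      have hpj1 : q ⟨j+1, hj1n⟩ < p ⟨j+1, hj1n⟩ := by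
        have he : (⟨j+1, hj1n⟩ : Fin n) = ⟨n-1-m, by omega⟩ := by
          simp [hj1]
        rw [he]; exact ihm
      have hlampos : 0 < lam (j+1) := hlam (j+1) (by omega) (by omega)
      have hlamn : 0 < lam n := hlam n (by omega) le_rfl
      have h1 : lam (j+1) * q ⟨j,hjn⟩ * (1 - q ⟨j+1,hj1n⟩) <
          lam (j+1) * p ⟨j,hjn⟩ * (1 - p ⟨j+1,hj1n⟩) := by
        rw [hp', hq']
        exact mul_lt_mul_of_pos_left hlast hlamn
      show q ⟨j, hjn⟩ < p ⟨j, hjn⟩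
      by_contra hc
      push_neg at hc
      have h2 : lam (j+1) * p ⟨j,hjn⟩ * (1 - p ⟨j+1,hj1n⟩) ≤
          lam (j+1) * q ⟨j,hjn⟩ * (1 - q ⟨j+1,hj1n⟩) := by
        have hq1 : (0:ℝ) < 1 - p ⟨j+1,hj1n⟩ := by
          have := (hp ⟨j+1,hj1n⟩).2; linarith
        have hpjpos := (hp ⟨j,hjn⟩).1
        have hqjpos := (hq ⟨j,hjn⟩).1
        have h3 : (1:ℝ) - p ⟨j+1,hj1n⟩ ≤ 1 - q ⟨j+1,hj1n⟩ := by linarith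
        gcongr
      linarith
  intro i
  have := key (n-1-i.val) (by omega)
  have heq : (⟨n-1-(n-1-i.val), by omega⟩ : Fin n) = i := by
    ext; simp; omega
  rwa [heq] at this
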